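/- For every integer m ≥ 1, the 3m × 3m complex matrix I₃ ⊗ J_m + E₁₃ ⊗ I_m (Kronecker products, where E₁₃ ∈ M₃(ℂ) is the matrix unit with 1 in position (1,3) and 0 elsewhere) is conjugate in GL_{3m}(ℂ) to the block-diagonal matrix J_{m+1} ⊕ J_m ⊕ J_{m−1} (the block J_{m−1} being absent when m = 1). In other words, adding the rank-m coupling E₁₃ ⊗ I_m to a nilpotent with three Jordan blocks of size m produces a nilpotent with Jordan type (m+1, m, m−1). -/

import Mathlib

open Matrix Kronecker Finset

noncomputable def Jmat (m : ℕ) : Matrix (Fin m) (Fin m) ℂ :=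
  Matrix.of fun i j => if (j : ℕ) = (i : ℕ) + 1 then 1 else 0

noncomputable def Pmat (m : ℕ) :
    Matrix (Fin 3 × Fin m) (Fin (m + 1) ⊕ (Fin m ⊕ Fin (m - 1))) ℂ :=
  fun x c => match c with
  | Sum.inl k =>
      (if x.1 = 0 ∧ (k : ℕ) = (x.2 : ℕ) then (m : ℂ) - (x.2 : ℕ) else 0) +
      (if x.1 = 2 ∧ (k : ℕ) = (x.2 : ℕ) + 1 then 1 else 0)
  | Sum.inr (Sum.inl k) => if x.1 = 1 ∧ (k : ℕ) = (x.2 : ℕ) then 1 else 0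
  | Sum.inr (Sum.inr k) =>
      (if x.1 = 0 ∧ ((k : ℕ) = (x.2 : ℕ) - 1 ∧ 1 ≤ (x.2 : ℕ)) then -((x.2 : ℕ) : ℂ) else 0) +
      (if x.1 = 2 ∧ (k : ℕ) = (x.2 : ℕ) then 1 else 0)

noncomputable def Qmat (m : ℕ) :
    Matrix (Fin (m + 1) ⊕ (Fin m ⊕ Fin (m - 1))) (Fin 3 × Fin m) ℂ :=
  fun c x => match c with
  | Sum.inl k =>
      (if x.1 = 0 ∧ (x.2 : ℕ) = (k : ℕ) then (m : ℂ)⁻¹ else 0) +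
      (if x.1 = 2 ∧ ((x.2 : ℕ) = (k : ℕ) - 1 ∧ 1 ≤ (k : ℕ)) then ((k : ℕ) : ℂ) / m else 0)
  | Sum.inr (Sum.inl k) => if x.1 = 1 ∧ (x.2 : ℕ) = (k : ℕ) then 1 else 0
  | Sum.inr (Sum.inr k) =>
      (if x.1 = 0 ∧ (x.2 : ℕ) = (k : ℕ) + 1 then -(m : ℂ)⁻¹ else 0) +
      (if x.1 = 2 ∧ (x.2 : ℕ) = (k : ℕ) then ((m : ℂ) - (k : ℕ) - 1) / m else 0)

lemma U1 (n c : ℕ) (f : Fin n → ℂ) :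
    (∑ x : Fin n, if (x : ℕ) = c then f x else 0) = if h : c < n then f ⟨c, h⟩ else 0 := by
  by_cases h : c < n
  · rw [dif_pos h, Finset.sum_eq_single (⟨c, h⟩ : Fin n)]
    · simp
    · intro b _ hb; rw [if_neg (by simpa [Fin.ext_iff] using hb)]
    · simp
  · rw [dif_neg h]
    exact Finset.sum_eq_zero fun x _ => by have := x.isLt; rw [if_neg (by omega)]

lemma U2 (n c : ℕ) (f : Fin n → ℂ) :
    (∑ x : Fin n, if c = (x : ℕ) then f x else 0) = if h : c < n then f ⟨c, h⟩ else 0 := by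
  rw [← U1]; exact Finset.sum_congr rfl fun x _ => if_congr eq_comm rfl rfl

lemma hPQ (m : ℕ) (hm : 1 ≤ m) : Pmat m * Qmat m = 1 := by
  have hm0 : (m : ℂ) ≠ 0 := Nat.cast_ne_zero.mpr (by omega)
  ext ⟨a, i⟩ ⟨b, j⟩
  rw [Matrix.mul_apply, Fintype.sum_sum_type, Fintype.sum_sum_type]
  fin_cases a <;> fin_cases b <;>
    (try simp only [Pmat, Qmat, Matrix.one_apply, Prod.mk.injEq, ite_and,
      show ((⟨0, by omega⟩ : Fin 3) : Fin 3) = 0 from rfl, add_mul, ite_mul, zero_mul,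
      Finset.sum_add_distrib]) <;>
    (try simp only [mul_ite, mul_zero, mul_one, mul_add]) <;>
    (try simp [Fin.ext_iff, U1, U2]) <;>
    (have hi := i.isLt; have hj := j.isLt; split_ifs <;>
      first
      | (exfalso; omega)
      | (norm_num; done)
      | (rw [Nat.cast_sub (by omega : 1 ≤ (i:ℕ))]; (try push_cast); field_simp; (try ring); done)
      | (rw [show ((i:ℕ):ℂ) = 0 from Nat.cast_eq_zero.mpr (by omega)]; field_simp; done)
      | ((try push_cast); field_simp; (try ring); done)
      | ((try push_cast); field_simp; (try ring_nf); (try norm_cast); (try rw [Int.subNatNat_eq_coe]); (try omega); done))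

lemma hQP (m : ℕ) (hm : 1 ≤ m) : Qmat m * Pmat m = 1 := by
  have hm0 : (m : ℂ) ≠ 0 := Nat.cast_ne_zero.mpr (by omega)
  ext c c'
  rw [Matrix.mul_apply, Fintype.sum_prod_type]
  rcases c with k | k | k <;> rcases c' with l | l | l <;>
    (try simp only [Qmat, Pmat, Matrix.one_apply, Fin.sum_univ_three, ite_and, add_mul, ite_mul,
      zero_mul, Finset.sum_add_distrib]) <;>
    (try simp only [mul_ite, mul_zero, mul_one, mul_add]) <;>
    (try simp [Fin.ext_iff, U1, U2]) <;>
    (have hk := k.isLt; have hl := l.isLt; split_ifs <;>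
      first
      | (exfalso; omega)
      | (norm_num; done)
      | (rw [Nat.cast_sub (by omega : 1 ≤ (k:ℕ))]; (try push_cast); field_simp; (try ring); done)
      | (rw [Nat.cast_sub (by omega : 1 ≤ (l:ℕ))]; (try push_cast); field_simp; (try ring); done)
      | ((try push_cast); field_simp; (try ring); done)
      | ((try push_cast); field_simp; (try ring_nf); (try norm_cast); (try rw [Int.subNatNat_eq_coe]); (try omega); done))

lemma hAP (m : ℕ) (hm : 1 ≤ m) :
    ((1 : Matrix (Fin 3) (Fin 3) ℂ) ⊗ₖ Jmat m +
        (Matrix.single (0 : Fin 3) (2 : Fin 3) (1 : ℂ)) ⊗ₖ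
          (1 : Matrix (Fin m) (Fin m) ℂ)) * Pmat m =
      Pmat m * Matrix.fromBlocks (Jmat (m + 1)) 0 0
        (Matrix.fromBlocks (Jmat m) 0 0 (Jmat (m - 1))) := by
  have hm0 : (m : ℂ) ≠ 0 := Nat.cast_ne_zero.mpr (by omega)
  ext ⟨a, i⟩ c
  rw [Matrix.mul_apply, Matrix.mul_apply, Fintype.sum_prod_type, Fintype.sum_sum_type,
    Fintype.sum_sum_type]
  rcases c with k | k | k <;> fin_cases a <;>
    (try simp only [Pmat, Jmat, Matrix.add_apply, Matrix.kroneckerMap_apply, Matrix.one_apply,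
      Matrix.single, Matrix.of_apply, Matrix.fromBlocks_apply₁₁, Matrix.fromBlocks_apply₁₂,
      Matrix.fromBlocks_apply₂₁, Matrix.fromBlocks_apply₂₂, Matrix.zero_apply,
      Fin.sum_univ_three, ite_and, add_mul, ite_mul, zero_mul, one_mul,
      Finset.sum_add_distrib]) <;>
    (try simp only [mul_ite, mul_zero, mul_one, mul_add]) <;>
    (try simp [Fin.ext_iff, U1, U2]) <;>
    (try (have hk := k.isLt; have hi := i.isLt; split_ifs <;>
      first
      | (exfalso; omega)
      | (norm_num; done)
      | (rw [Nat.cast_sub (by omega : 1 ≤ (k:ℕ))]; (try push_cast); field_simp; (try ring); done)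
      | (rw [Nat.cast_sub (by omega : 1 ≤ (i:ℕ))]; (try push_cast); field_simp; (try ring); done)
      | ((try push_cast); field_simp; (try ring); done)
      | (ring_nf; done)
      | (rw [show (m:ℂ) = ((i:ℕ):ℂ) + 1 from by exact_mod_cast congrArg (Nat.cast : ℕ → ℂ) (show m = (i:ℕ)+1 by omega)]; ring; done)
      | (rw [show (m:ℂ) = ((k:ℕ):ℂ) + 1 from by exact_mod_cast congrArg (Nat.cast : ℕ → ℂ) (show m = (k:ℕ)+1 by omega)]; ring; done)
      | ((try push_cast); field_simp; (try ring_nf); (try norm_cast); (try omega); done)))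


/-- `I₃ ⊗ J_m + E₁₃ ⊗ I_m` is conjugate in `GL_{3m}(ℂ)` to `J_{m+1} ⊕ J_m ⊕ J_{m−1}`. -/
theorem stmt_14 (m : ℕ) (hm : 1 ≤ m) :
    ∃ (P : Matrix (Fin 3 × Fin m) (Fin (m + 1) ⊕ (Fin m ⊕ Fin (m - 1))) ℂ)
      (Q : Matrix (Fin (m + 1) ⊕ (Fin m ⊕ Fin (m - 1))) (Fin 3 × Fin m) ℂ),
      P * Q = 1 ∧ Q * P = 1 ∧
      (1 : Matrix (Fin 3) (Fin 3) ℂ) ⊗ₖ Jmat m +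
          (Matrix.single (0 : Fin 3) (2 : Fin 3) (1 : ℂ)) ⊗ₖ
            (1 : Matrix (Fin m) (Fin m) ℂ) =
        P * Matrix.fromBlocks (Jmat (m + 1)) 0 0
              (Matrix.fromBlocks (Jmat m) 0 0 (Jmat (m - 1))) * Q := by
  refine ⟨Pmat m, Qmat m, hPQ m hm, hQP m hm, ?_⟩
  set A := (1 : Matrix (Fin 3) (Fin 3) ℂ) ⊗ₖ Jmat m +
      (Matrix.single (0 : Fin 3) (2 : Fin 3) (1 : ℂ)) ⊗ₖ
        (1 : Matrix (Fin m) (Fin m) ℂ) with hA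
  set B := Matrix.fromBlocks (Jmat (m + 1)) 0 0
      (Matrix.fromBlocks (Jmat m) 0 0 (Jmat (m - 1))) with hB
  calc A = A * (Pmat m * Qmat m) := by rw [hPQ m hm, mul_one]
  _ = (A * Pmat m) * Qmat m := by rw [Matrix.mul_assoc]
  _ = (Pmat m * B) * Qmat m := by rw [hAP m hm]
  _ = Pmat m * B * Qmat m := rfl
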